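/- Let p be an odd prime and s ∈ {1, −1}. Then twice the number of g ∈ GL₂(ℤ/pℤ) such that det(1 − g) ≠ 0 and (det(g)/p) = s equals p(p³ − 2p² − p + 3 + s). In particular, the number of such g with (det(g)/p) = 1 exceeds the number with (det(g)/p) = −1 by exactly p. -/

import Mathlib

open Matrix

open Finset

section Aux

variable {p : ℕ} [Fact p.Prime]

lemma sum_ite_ne (y : ZMod p) (g : ZMod p → ℤ) :
    ∑ x : ZMod p, (if x = y then 0 else g x) = (∑ x : ZMod p, g x) - g y := by
  have : ∀ x : ZMod p, (if x = y then 0 else g x) = g x - (if x = y then g x else 0) := by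
    intro x; by_cases h : x = y <;> simp [h]
  rw [Finset.sum_congr rfl fun x _ => this x, Finset.sum_sub_distrib,
    Finset.sum_ite_eq' univ y g, if_pos (mem_univ y)]

lemma sum_shift (c : ZMod p) (φ : ZMod p → ℤ) :
    ∑ x : ZMod p, φ (x + c) = ∑ x : ZMod p, φ x :=
  Fintype.sum_equiv (Equiv.addRight c) _ _ (fun x => rfl)

lemma sum_sub_left (P : ZMod p) (φ : ZMod p → ℤ) :
    ∑ u : ZMod p, φ (P - u) = ∑ x : ZMod p, φ x :=
  Fintype.sum_equiv (Equiv.subLeft P) _ _ (fun x => rfl)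

lemma sum_fiber (F : ZMod p → ℤ) :
    ∑ b : ZMod p, ∑ c : ZMod p, F (b * c)
      = p * F 0 + ((p : ℤ) - 1) * ∑ u : ZMod p, F u := by
  have h0 : (0 : ZMod p) ∈ (univ : Finset (ZMod p)) := mem_univ _
  rw [← Finset.add_sum_erase _ _ h0]
  have hcard : (univ : Finset (ZMod p)).card = p := by simp [ZMod.card]
  have h1 : ∑ c : ZMod p, F ((0 : ZMod p) * c) = p * F 0 := by
    simp [Finset.sum_const, hcard, mul_comm]
  have h2 : ∀ b ∈ (univ : Finset (ZMod p)).erase 0,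
      ∑ c : ZMod p, F (b * c) = ∑ u : ZMod p, F u := by
    intro b hb
    exact Fintype.sum_equiv (Equiv.mulLeft₀ b (Finset.mem_erase.mp hb).1) _ _ (fun x => rfl)
  rw [h1, Finset.sum_congr rfl h2, Finset.sum_const, Finset.card_erase_of_mem h0, hcard]
  have : p ≠ 0 := (Fact.out : p.Prime).ne_zero
  rw [nsmul_eq_mul, Nat.cast_sub (Nat.one_le_iff_ne_zero.mpr this)]
  push_cast
  ring

lemma master (φ : ZMod p → ℤ) (h1 : φ 1 = 1)
    (hmul : ∀ x y, φ (x * y) = φ x * φ y) (T : ℤ) (hT : ∑ x : ZMod p, φ x = T) :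
    ∑ a : ZMod p, ∑ b : ZMod p, ∑ c : ZMod p, ∑ d : ZMod p,
      (if (1-a)*(1-d) = b*c then 0 else φ (a*d - b*c))
    = p * ((T - 1)^2 + ((p : ℤ) - 1)^2 * T) := by
  have reorder : ∀ (X : ZMod p → ZMod p → ZMod p → ℤ),
      (∑ b : ZMod p, ∑ c : ZMod p, ∑ d : ZMod p, X b c d)
        = ∑ d : ZMod p, ∑ b : ZMod p, ∑ c : ZMod p, X b c d := by
    intro X
    calc (∑ b : ZMod p, ∑ c : ZMod p, ∑ d : ZMod p, X b c d)
        = ∑ b : ZMod p, ∑ d : ZMod p, ∑ c : ZMod p, X b c d :=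
          Finset.sum_congr rfl (fun b _ => Finset.sum_comm)
      _ = ∑ d : ZMod p, ∑ b : ZMod p, ∑ c : ZMod p, X b c d := Finset.sum_comm
  -- inner computation for fixed a, d
  have inner : ∀ a d : ZMod p,
      (∑ b : ZMod p, ∑ c : ZMod p, (if (1-a)*(1-d) = b*c then 0 else φ (a*d - b*c)))
        = p * (if (1-a)*(1-d) = 0 then 0 else φ (a*d))
          + ((p : ℤ) - 1) * (T - φ (a + d - 1)) := by
    intro a d
    have := sum_fiber (p := p) (fun u => if (1-a)*(1-d) = u then 0 else φ (a*d - u))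
    rw [this]
    congr 1
    · rw [sub_zero]
    congr 1
    have flip : (∑ u : ZMod p, (if (1-a)*(1-d) = u then 0 else φ (a*d - u)))
        = ∑ u : ZMod p, (if u = (1-a)*(1-d) then 0 else φ (a*d - u)) :=
      Finset.sum_congr rfl (fun u _ => if_congr eq_comm rfl rfl)
    rw [flip, sum_ite_ne, sum_sub_left, hT]
    congr 2
    ring
  rw [Finset.sum_congr rfl (fun (a : ZMod p) _ =>
    (reorder (fun b c d => if (1-a)*(1-d) = b*c then 0 else φ (a*d - b*c))).trans
      (Finset.sum_congr rfl (fun d _ => inner a d)))]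
  -- split the double sum
  have split : ∀ a : ZMod p, (∑ d : ZMod p,
      ((p : ℤ) * (if (1-a)*(1-d) = 0 then 0 else φ (a*d))
        + ((p : ℤ) - 1) * (T - φ (a + d - 1))))
      = (p : ℤ) * (∑ d : ZMod p, (if (1-a)*(1-d) = 0 then 0 else φ (a*d)))
        + ((p : ℤ) - 1) * ((p : ℤ) * T - T) := by
    intro a
    rw [Finset.sum_add_distrib, ← Finset.mul_sum, ← Finset.mul_sum]
    congr 2
    rw [Finset.sum_sub_distrib, Finset.sum_const]
    have hs : (∑ d : ZMod p, φ (a + d - 1)) = T := by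
      rw [← hT]
      refine Eq.trans (Finset.sum_congr rfl fun d _ => ?_) (sum_shift (a - 1) φ)
      congr 1; ring
    rw [hs]
    simp [ZMod.card, mul_comm]
  rw [Finset.sum_congr rfl (fun a _ => split a)]
  have hC : ∀ a : ZMod p, (∑ d : ZMod p, (if (1-a)*(1-d) = 0 then 0 else φ (a*d)))
      = (if a = 1 then 0 else φ a * (T - 1)) := by
    intro a
    rcases eq_or_ne a 1 with ha|ha
    · simp [ha]
    · rw [if_neg ha]
      have pt : ∀ d : ZMod p, (if (1-a)*(1-d) = 0 then 0 else φ (a*d))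
          = (if d = 1 then 0 else φ a * φ d) := by
        intro d
        rcases eq_or_ne d 1 with hd|hd
        · simp [hd]
        · rw [if_neg (mul_ne_zero (sub_ne_zero.mpr (Ne.symm ha)) (sub_ne_zero.mpr (Ne.symm hd))),
            if_neg hd, hmul]
      rw [Finset.sum_congr rfl (fun d _ => pt d), sum_ite_ne 1 (fun d => φ a * φ d),
        ← Finset.mul_sum, hT, h1]
      ring
  rw [Finset.sum_add_distrib, Finset.sum_const, Finset.sum_congr rfl (fun a _ => congrArg _ (hC a)),
    ← Finset.mul_sum, sum_ite_ne 1 (fun a => φ a * (T - 1)), ← Finset.sum_mul, hT, h1,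
    nsmul_eq_mul]
  simp only [Finset.card_univ, ZMod.card]
  ring

def mEquiv (p : ℕ) : ((ZMod p × ZMod p) × ZMod p × ZMod p) ≃ Matrix (Fin 2) (Fin 2) (ZMod p) where
  toFun x := !![x.1.1, x.1.2; x.2.1, x.2.2]
  invFun M := ((M 0 0, M 0 1), (M 1 0, M 1 1))
  left_inv x := rfl
  right_inv M := (Matrix.eta_fin_two M).symm

lemma count_matrices (hp : p ≠ 2) (s : ℤ) (hs : s = 1 ∨ s = -1) :
    2 * ((Finset.univ.filter (fun M : Matrix (Fin 2) (Fin 2) (ZMod p) =>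
        Matrix.det (1 - M) ≠ 0 ∧ (quadraticChar (ZMod p) (Matrix.det M) : ℤ) = s)).card : ℤ)
      = p * ((p : ℤ) ^ 3 - 2 * (p : ℤ) ^ 2 - (p : ℤ) + 3 + s) := by
  set χ : ZMod p → ℤ := fun x => quadraticChar (ZMod p) x with hχ
  have hχ1 : χ 1 = 1 := map_one _
  have hχmul : ∀ x y : ZMod p, χ (x * y) = χ x * χ y := fun x y => map_mul _ x y
  have hχT : ∑ x : ZMod p, χ x = 0 :=
    quadraticChar_sum_zero (by rw [ZMod.ringChar_zmod_n]; exact hp)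
  have hχval : ∀ x : ZMod p, χ x = 0 ∨ χ x = 1 ∨ χ x = -1 :=
    quadraticChar_isQuadratic (ZMod p)
  have hχ0 : χ 0 = 0 := quadraticChar_zero
  set ψ : ZMod p → ℤ := fun x => χ x ^ 2 with hψ
  have hψ1 : ψ 1 = 1 := by simp [hψ, hχ1]
  have hψmul : ∀ x y : ZMod p, ψ (x * y) = ψ x * ψ y := by
    intro x y; simp only [hψ, hχmul]; ring
  have hψpt : ∀ x : ZMod p, ψ x = if x = 0 then 0 else 1 := by
    intro x
    rcases eq_or_ne x 0 with h | h
    · simp [hψ, h, hχ0]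
    · rw [if_neg h]; exact quadraticChar_sq_one h
  have hψT : ∑ x : ZMod p, ψ x = (p : ℤ) - 1 := by
    rw [Finset.sum_congr rfl (fun x _ => hψpt x), sum_ite_ne 0 (fun _ => (1 : ℤ))]
    simp [ZMod.card]
  -- turn the card into a sum over quadruples
  have hcard : ((Finset.univ.filter (fun M : Matrix (Fin 2) (Fin 2) (ZMod p) =>
        Matrix.det (1 - M) ≠ 0 ∧ (quadraticChar (ZMod p) (Matrix.det M) : ℤ) = s)).card : ℤ)
      = ∑ a : ZMod p, ∑ b : ZMod p, ∑ c : ZMod p, ∑ d : ZMod p,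
          (if (1-a)*(1-d) - b*c ≠ 0 ∧ χ (a*d - b*c) = s then (1 : ℤ) else 0) := by
    rw [Finset.card_filter]
    push_cast
    rw [← Fintype.sum_equiv (mEquiv p)
      (fun x => if (1-x.1.1)*(1-x.2.2) - x.1.2*x.2.1 ≠ 0 ∧ χ (x.1.1*x.2.2 - x.1.2*x.2.1) = s
        then (1 : ℤ) else 0)
      (fun M => if Matrix.det (1 - M) ≠ 0 ∧ (quadraticChar (ZMod p) (Matrix.det M) : ℤ) = s
        then (1 : ℤ) else 0) ?_]
    · simp only [Fintype.sum_prod_type]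
    · intro x
      obtain ⟨⟨a, b⟩, c, d⟩ := x
      have h1 : Matrix.det (1 - (mEquiv p) ((a,b),(c,d))) = (1-a)*(1-d) - b*c := by
        rw [show (mEquiv p) ((a,b),(c,d)) = !![a, b; c, d] from rfl]
        simp [mEquiv, Matrix.det_fin_two, Matrix.sub_apply, Matrix.one_apply]
      have h2 : Matrix.det ((mEquiv p) ((a,b),(c,d))) = a*d - b*c := by
        rw [show (mEquiv p) ((a,b),(c,d)) = !![a, b; c, d] from rfl]
        simp [mEquiv, Matrix.det_fin_two_of]
      rw [show (mEquiv p) ((a,b),(c,d)) = !![a, b; c, d] from rfl] at h1 h2 ⊢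
      rw [h1, h2]
  rw [hcard]
  have pt : ∀ a b c d : ZMod p,
      2 * (if (1-a)*(1-d) - b*c ≠ 0 ∧ χ (a*d - b*c) = s then (1:ℤ) else 0)
        = (if (1-a)*(1-d) = b*c then 0 else ψ (a*d - b*c))
          + s * (if (1-a)*(1-d) = b*c then 0 else χ (a*d - b*c)) := by
    intro a b c d
    have hps : ψ (a*d - b*c) = χ (a*d - b*c) ^ 2 := rfl
    rcases eq_or_ne ((1-a)*(1-d)) (b*c) with h | h
    · rw [if_pos h, if_pos h, if_neg (by simp [sub_eq_zero, h])]
      ring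
    · rw [if_neg h, if_neg h, hps]
      have hne : (1-a)*(1-d) - b*c ≠ 0 := sub_ne_zero.mpr h
      by_cases hc : χ (a*d - b*c) = s
      · rw [if_pos ⟨hne, hc⟩, hc]
        rcases hs with rfl | rfl <;> norm_num
      · rw [if_neg (fun hh => hc hh.2)]
        rcases hχval (a*d - b*c) with h' | h' | h' <;> rcases hs with rfl | rfl <;>
          first
            | exact absurd h' hc
            | (rw [h']; norm_num)
  have e1 : (2 : ℤ) * (∑ a : ZMod p, ∑ b : ZMod p, ∑ c : ZMod p, ∑ d : ZMod p,
        (if (1-a)*(1-d) - b*c ≠ 0 ∧ χ (a*d - b*c) = s then (1:ℤ) else 0))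
      = ∑ a : ZMod p, ∑ b : ZMod p, ∑ c : ZMod p, ∑ d : ZMod p,
        ((if (1-a)*(1-d) = b*c then 0 else ψ (a*d - b*c))
          + s * (if (1-a)*(1-d) = b*c then 0 else χ (a*d - b*c))) := by
    simp only [Finset.mul_sum]
    exact Finset.sum_congr rfl fun a _ => Finset.sum_congr rfl fun b _ =>
      Finset.sum_congr rfl fun c _ => Finset.sum_congr rfl fun d _ => pt a b c d
  have e3 : (∑ a : ZMod p, ∑ b : ZMod p, ∑ c : ZMod p, ∑ d : ZMod p,
        ((if (1-a)*(1-d) = b*c then 0 else ψ (a*d - b*c))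
          + s * (if (1-a)*(1-d) = b*c then 0 else χ (a*d - b*c))))
      = (∑ a : ZMod p, ∑ b : ZMod p, ∑ c : ZMod p, ∑ d : ZMod p,
          (if (1-a)*(1-d) = b*c then 0 else ψ (a*d - b*c)))
        + s * (∑ a : ZMod p, ∑ b : ZMod p, ∑ c : ZMod p, ∑ d : ZMod p,
          (if (1-a)*(1-d) = b*c then 0 else χ (a*d - b*c))) := by
    simp only [Finset.sum_add_distrib, ← Finset.mul_sum]
  rw [e1, e3, master ψ hψ1 hψmul ((p : ℤ) - 1) hψT, master χ hχ1 hχmul 0 hχT]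
  ring

lemma nat_card_GL (P : Matrix (Fin 2) (Fin 2) (ZMod p) → Prop) (hP : ∀ M, P M → M.det ≠ 0) :
    Nat.card {g : GL (Fin 2) (ZMod p) | P (g : Matrix (Fin 2) (Fin 2) (ZMod p))}
      = Nat.card {M : Matrix (Fin 2) (Fin 2) (ZMod p) | P M} := by
  apply Nat.card_congr
  exact ⟨fun g => ⟨g.1, g.2⟩, fun M => ⟨Matrix.GeneralLinearGroup.mkOfDetNeZero M.1 (hP M.1 M.2), M.2⟩,
    fun g => Subtype.ext (Units.ext rfl), fun M => Subtype.ext rfl⟩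

end Aux

/-- For an odd prime `p` and `s ∈ {1,-1}`, twice the number of `g ∈ GL₂(ℤ/pℤ)`
with `det(1-g) ≠ 0` and Legendre symbol of `det g` equal to `s` is
`p(p³ - 2p² - p + 3 + s)`. In particular, the count with symbol `1` exceeds the
count with symbol `-1` by exactly `p`. -/
theorem card_GL2_one_sub_invertible_legendre (p : ℕ) [Fact p.Prime] (hp : p ≠ 2) :
    (∀ s : ℤ, s = 1 ∨ s = -1 →
      2 * (Nat.card {g : GL (Fin 2) (ZMod p) |
          Matrix.det (1 - (g : Matrix (Fin 2) (Fin 2) (ZMod p))) ≠ 0 ∧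
          legendreSym p ((Matrix.det (g : Matrix (Fin 2) (Fin 2) (ZMod p))).val : ℤ) = s} : ℤ)
        = p * ((p : ℤ) ^ 3 - 2 * (p : ℤ) ^ 2 - p + 3 + s))
    ∧
    (Nat.card {g : GL (Fin 2) (ZMod p) |
        Matrix.det (1 - (g : Matrix (Fin 2) (Fin 2) (ZMod p))) ≠ 0 ∧
        legendreSym p ((Matrix.det (g : Matrix (Fin 2) (Fin 2) (ZMod p))).val : ℤ) = 1} : ℤ)
      - (Nat.card {g : GL (Fin 2) (ZMod p) |
        Matrix.det (1 - (g : Matrix (Fin 2) (Fin 2) (ZMod p))) ≠ 0 ∧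
        legendreSym p ((Matrix.det (g : Matrix (Fin 2) (Fin 2) (ZMod p))).val : ℤ) = -1} : ℤ)
      = p := by
  have hleg : ∀ z : ZMod p, legendreSym p ((z.val : ℤ)) = quadraticChar (ZMod p) z := by
    intro z
    rw [legendreSym]; norm_cast; rw [ZMod.natCast_val, ZMod.cast_id]
  have key : ∀ s : ℤ, s = 1 ∨ s = -1 →
      2 * (Nat.card {g : GL (Fin 2) (ZMod p) |
          Matrix.det (1 - (g : Matrix (Fin 2) (Fin 2) (ZMod p))) ≠ 0 ∧
          legendreSym p ((Matrix.det (g : Matrix (Fin 2) (Fin 2) (ZMod p))).val : ℤ) = s} : ℤ)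
        = p * ((p : ℤ) ^ 3 - 2 * (p : ℤ) ^ 2 - p + 3 + s) := by
    intro s hs
    have hset : {g : GL (Fin 2) (ZMod p) |
          Matrix.det (1 - (g : Matrix (Fin 2) (Fin 2) (ZMod p))) ≠ 0 ∧
          legendreSym p ((Matrix.det (g : Matrix (Fin 2) (Fin 2) (ZMod p))).val : ℤ) = s}
        = {g : GL (Fin 2) (ZMod p) |
          (fun M : Matrix (Fin 2) (Fin 2) (ZMod p) =>
            Matrix.det (1 - M) ≠ 0 ∧ (quadraticChar (ZMod p) (Matrix.det M) : ℤ) = s)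
            (g : Matrix (Fin 2) (Fin 2) (ZMod p))} := by
      ext g
      simp only [Set.mem_setOf_eq, hleg]
    have hP : ∀ M : Matrix (Fin 2) (Fin 2) (ZMod p),
        (Matrix.det (1 - M) ≠ 0 ∧ (quadraticChar (ZMod p) (Matrix.det M) : ℤ) = s) → M.det ≠ 0 := by
      intro M hM hdet
      rcases hs with rfl | rfl <;>
        simp [hdet, quadraticChar_zero] at hM
    rw [hset, nat_card_GL (fun M : Matrix (Fin 2) (Fin 2) (ZMod p) =>
      Matrix.det (1 - M) ≠ 0 ∧ (quadraticChar (ZMod p) (Matrix.det M) : ℤ) = s) hP]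
    have hNc : Nat.card {M : Matrix (Fin 2) (Fin 2) (ZMod p) |
          Matrix.det (1 - M) ≠ 0 ∧ (quadraticChar (ZMod p) (Matrix.det M) : ℤ) = s}
        = (Finset.univ.filter (fun M : Matrix (Fin 2) (Fin 2) (ZMod p) =>
            Matrix.det (1 - M) ≠ 0 ∧ (quadraticChar (ZMod p) (Matrix.det M) : ℤ) = s)).card := by
      rw [Nat.card_eq_fintype_card]
      convert Fintype.card_subtype _
      · exact Iff.rfl
      · exact Classical.decPred _
    rw [hNc]
    exact count_matrices hp s hs
  refine ⟨key, ?_⟩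
  have h1 := key 1 (Or.inl rfl)
  have h2 := key (-1) (Or.inr rfl)
  linarith
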